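/- Let $d \ge 1$ and let $r = e^d$ (or any real $r$ with $\ln r = d$). Then $C(\lfloor r \rfloor, d) \le (3e^2)^d$, where $C(r,d) = \#\{k \in \mathbb{Z}^d : \prod_{j=1}^d (1+|k_j|) \le r\}$. -/

import Mathlib

open Finset

/-- `C r d` : number of lattice points `k ∈ ℤ^d` with `∏ (1+|k_j|) ≤ r`. -/
noncomputable def latticeCount (r d : ℕ) : ℕ :=
  Set.ncard {k : Fin d → ℤ | ∏ j, (1 + (k j).natAbs) ≤ r}

noncomputable def latF (d n : ℕ) : Finset (Fin d → ℤ) :=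
  (Fintype.piFinset fun _ => Finset.Icc (-(n:ℤ)) n).filter
    fun k => ∏ j, (1 + (k j).natAbs) ≤ n

lemma factor_le {d n : ℕ} {k : Fin d → ℤ} (h : ∏ j, (1 + (k j).natAbs) ≤ n) (i : Fin d) :
    1 + (k i).natAbs ≤ n :=
  le_trans (Finset.single_le_prod' (f := fun j => 1 + (k j).natAbs)
    (fun _ _ => Nat.le_add_right 1 _) (Finset.mem_univ i)) h

lemma mem_latF {d n : ℕ} {k : Fin d → ℤ} :
    k ∈ latF d n ↔ ∏ j, (1 + (k j).natAbs) ≤ n := by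
  constructor
  · intro h; exact (Finset.mem_filter.mp h).2
  · intro h
    refine Finset.mem_filter.mpr ⟨Fintype.mem_piFinset.mpr fun i => ?_, h⟩
    have := factor_le h i
    have h2 : (k i).natAbs ≤ n := by omega
    rw [Finset.mem_Icc]
    omega

lemma latF_succ (d n : ℕ) :
    (latF (d+1) n).card = ∑ a ∈ Finset.Icc (-(n:ℤ)) n, (latF d (n / (1 + a.natAbs))).card := by
  rw [Finset.card_eq_sum_card_fiberwise (f := fun k => k (Fin.last d))
    (t := Finset.Icc (-(n:ℤ)) n)]
  · refine Finset.sum_congr rfl fun a _ => ?_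
    apply Finset.card_nbij' (i := fun k => Fin.init k) (j := fun k => Fin.snoc k a)
    · intro k hk
      obtain ⟨hk1, hk2⟩ := Finset.mem_filter.mp hk
      have h := mem_latF.mp hk1
      rw [Fin.prod_univ_castSucc] at h
      rw [Finset.mem_coe, mem_latF, Nat.le_div_iff_mul_le (by positivity)]
      have : ∀ j : Fin d, Fin.init k j = k j.castSucc := fun j => rfl
      simp only [this]
      rw [← hk2]
      exact h
    · intro k hk
      have h := mem_latF.mp hk
      refine Finset.mem_filter.mpr ⟨mem_latF.mpr ?_, by simp⟩
      rw [Fin.prod_univ_castSucc]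
      simp only [Fin.snoc_castSucc, Fin.snoc_last]
      rw [Nat.le_div_iff_mul_le (by positivity)] at h
      exact h
    · intro k hk
      have hk2 := (Finset.mem_filter.mp hk).2
      rw [← hk2]
      exact Fin.snoc_init_self k
    · intro k _
      simp [Fin.init_snoc]
  · intro k hk
    have h := factor_le (mem_latF.mp hk) (Fin.last d)
    simp only [Finset.mem_coe, Finset.mem_Icc]
    have : (k (Fin.last d)).natAbs ≤ n := by omega
    omega


lemma latticeCount_eq (n d : ℕ) : latticeCount n d = (latF d n).card := by
  rw [latticeCount, show {k : Fin d → ℤ | ∏ j, (1 + (k j).natAbs) ≤ n} = ↑(latF d n) by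
    ext k; simp [mem_latF]]
  exact Set.ncard_coe_finset _

lemma tel1 {A B : ℝ} (hB : 0 ≤ B) (hAB : B ≤ A) (ℓ : ℕ) :
    (ℓ + 1 : ℝ) * (B ^ ℓ * (A - B)) ≤ A ^ (ℓ+1) - B ^ (ℓ+1) := by
  rw [← geom_sum₂_mul (n := ℓ+1)]
  have key : (ℓ + 1 : ℝ) * B ^ ℓ ≤ ∑ i ∈ Finset.range (ℓ+1), A ^ i * B ^ (ℓ - i) := by
    have : ∀ i ∈ Finset.range (ℓ+1), B ^ ℓ ≤ A ^ i * B ^ (ℓ - i) := by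
      intro i hi
      have hi' : i ≤ ℓ := Nat.lt_succ_iff.mp (Finset.mem_range.mp hi)
      calc B ^ ℓ = B ^ i * B ^ (ℓ - i) := by rw [← pow_add]; congr 1; omega
        _ ≤ A ^ i * B ^ (ℓ - i) := by
            apply mul_le_mul_of_nonneg_right (pow_le_pow_left₀ hB hAB i) (pow_nonneg hB _)
    calc (ℓ + 1 : ℝ) * B ^ ℓ = ∑ _i ∈ Finset.range (ℓ+1), B ^ ℓ := by
          rw [Finset.sum_const, Finset.card_range]; push_cast; ring
      _ ≤ _ := Finset.sum_le_sum this
  have hABn : 0 ≤ A - B := by linarith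
  calc (ℓ + 1 : ℝ) * (B ^ ℓ * (A - B)) = ((ℓ+1 : ℝ) * B ^ ℓ) * (A - B) := by ring
    _ ≤ (∑ i ∈ Finset.range (ℓ+1), A ^ i * B ^ (ℓ - i)) * (A - B) :=
        mul_le_mul_of_nonneg_right key hABn

lemma tel2 (m : ℕ) (hm : 2 ≤ m) :
    (1 : ℝ) / m ≤ Real.log m - Real.log (m - 1 : ℕ) := by
  have h1 : (0:ℝ) < ((m - 1 : ℕ) : ℝ) := by
    have : 1 ≤ m - 1 := by omega
    exact_mod_cast Nat.lt_of_lt_of_le Nat.zero_lt_one this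
  have hm0 : (0:ℝ) < (m:ℝ) := by positivity
  have hq : (0:ℝ) < ((m-1:ℕ):ℝ) / m := by positivity
  have hlog : Real.log (((m-1:ℕ):ℝ) / m) ≤ ((m-1:ℕ):ℝ) / m - 1 :=
    Real.log_le_sub_one_of_pos hq
  rw [Real.log_div (by positivity) (by positivity)] at hlog
  have hc : ((m-1:ℕ):ℝ) = (m:ℝ) - 1 := by
    have : (1:ℕ) ≤ m := by omega
    push_cast [this]; ring
  rw [hc] at hlog ⊢
  have : ((m:ℝ) - 1) / m - 1 = -(1/m) := by field_simp; ring
  linarith [hlog, this ▸ hlog]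

lemma tel3 (x : ℝ) (ℓ : ℕ) : ∀ n : ℕ, Real.log n ≤ x →
    ∑ m ∈ Finset.Icc 2 n, (x - Real.log m) ^ ℓ / m ≤
      (x ^ (ℓ+1) - (x - Real.log n) ^ (ℓ+1)) / (ℓ+1) := by
  intro n
  induction n with
  | zero => intro _; simp
  | succ n ih =>
    intro hx
    rcases Nat.lt_or_ge (n+1) 2 with h2 | h2
    · have hn0 : n = 0 := by omega
      subst hn0
      simp
    · have hn1 : 1 ≤ n := by omega
      have hmono : Real.log n ≤ Real.log ((n+1 : ℕ) : ℝ) :=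
        Real.log_le_log (by exact_mod_cast hn1) (by exact_mod_cast Nat.le_succ n)
      have hn2 : Real.log n ≤ x := le_trans hmono hx
      rw [← Finset.insert_Icc_right_eq_Icc_add_one (by omega), Finset.sum_insert (by simp)]
      set A := x - Real.log n with hA
      set B := x - Real.log ((n+1 : ℕ) : ℝ) with hBdef
      have hB : (0:ℝ) ≤ B := sub_nonneg.mpr hx
      have hAB : B ≤ A := sub_le_sub_left hmono x
      have h12 : (1:ℝ)/((n+1:ℕ):ℝ) ≤ A - B := by
        have := tel2 (n+1) (by omega)
        have hc : ((n+1) - 1 : ℕ) = n := by omega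
        rw [hc] at this
        rw [hA, hBdef]
        linarith
      have h12' : 1 ≤ ((n+1:ℕ):ℝ) * (A - B) := by
        rw [div_le_iff₀ (by positivity)] at h12
        linarith
      have hterm : B ^ ℓ / ((n+1:ℕ):ℝ) ≤ (A ^ (ℓ+1) - B ^ (ℓ+1)) / (ℓ+1) := by
        rw [div_le_div_iff₀ (by positivity) (by positivity)]
        calc B ^ ℓ * ((ℓ:ℝ)+1) = ((ℓ:ℝ)+1) * (B ^ ℓ * 1) := by ring
          _ ≤ ((ℓ:ℝ)+1) * (B ^ ℓ * (((n+1:ℕ):ℝ) * (A - B))) := by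
              apply mul_le_mul_of_nonneg_left _ (by positivity)
              exact mul_le_mul_of_nonneg_left h12' (pow_nonneg hB ℓ)
          _ = (((ℓ:ℝ)+1) * (B ^ ℓ * (A - B))) * ((n+1:ℕ):ℝ) := by ring
          _ ≤ (A ^ (ℓ+1) - B ^ (ℓ+1)) * ((n+1:ℕ):ℝ) :=
              mul_le_mul_of_nonneg_right (tel1 hB hAB ℓ) (by positivity)
      have hih := ih hn2
      have hsum : (x ^ (ℓ+1) - B ^ (ℓ+1)) / ((ℓ:ℝ)+1) =
          (x ^ (ℓ+1) - A ^ (ℓ+1)) / ((ℓ:ℝ)+1) + (A ^ (ℓ+1) - B ^ (ℓ+1)) / ((ℓ:ℝ)+1) := by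
        ring
      push_cast
      push_cast at hih hterm hsum
      linarith

lemma sumIccInt (g : ℕ → ℝ) : ∀ n : ℕ,
    ∑ a ∈ Finset.Icc (-(n:ℤ)) n, g a.natAbs = g 0 + 2 * ∑ m ∈ Finset.Icc 1 n, g m := by
  intro n
  induction n with
  | zero => simp
  | succ n ih =>
    have hsplit : Finset.Icc (-((n+1:ℕ):ℤ)) ((n+1:ℕ):ℤ) =
        insert (-((n+1:ℕ):ℤ)) (insert (((n+1:ℕ):ℤ)) (Finset.Icc (-(n:ℤ)) n)) := by
      ext a
      simp only [Finset.mem_Icc, Finset.mem_insert]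
      push_cast
      omega
    rw [hsplit, Finset.sum_insert, Finset.sum_insert, ih,
      ← Finset.insert_Icc_right_eq_Icc_add_one (by omega), Finset.sum_insert (by simp)]
    · simp only [Int.natAbs_neg, Int.natAbs_natCast]
      ring
    · simp only [Finset.mem_Icc]
      push_cast
      omega
    · simp only [Finset.mem_insert, Finset.mem_Icc]
      push_cast
      omega

noncomputable def fP (d : ℕ) (x : ℝ) : ℝ :=
  ∑ ℓ ∈ Finset.range (d+1), (d.choose ℓ : ℝ) * 2^ℓ * x^ℓ / (ℓ.factorial : ℝ)

lemma fP_nonneg (d : ℕ) {x : ℝ} (hx : 0 ≤ x) : 0 ≤ fP d x :=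
  Finset.sum_nonneg fun ℓ _ => by positivity

lemma fP_mono (d : ℕ) {x y : ℝ} (hx : 0 ≤ x) (hxy : x ≤ y) : fP d x ≤ fP d y :=
  Finset.sum_le_sum fun ℓ _ => by
    have : x ^ ℓ ≤ y ^ ℓ := pow_le_pow_left₀ hx hxy ℓ
    have h0 : (0:ℝ) ≤ (d.choose ℓ : ℝ) * 2^ℓ := by positivity
    gcongr

lemma fP_zero (x : ℝ) : fP 0 x = 1 := by simp [fP]

lemma fP_succ (d : ℕ) (x : ℝ) :
    fP (d+1) x = fP d x +
      ∑ ℓ ∈ Finset.range (d+1), (d.choose ℓ : ℝ) * 2^(ℓ+1) * x^(ℓ+1) / ((ℓ+1).factorial : ℝ) := by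
  rw [fP, Finset.sum_range_succ' _ (d+1)]
  have hsplit : ∀ ℓ ∈ Finset.range (d+1),
      ((d+1).choose (ℓ+1) : ℝ) * 2^(ℓ+1) * x^(ℓ+1) / ((ℓ+1).factorial : ℝ) =
      (d.choose (ℓ+1) : ℝ) * 2^(ℓ+1) * x^(ℓ+1) / ((ℓ+1).factorial : ℝ) +
      (d.choose ℓ : ℝ) * 2^(ℓ+1) * x^(ℓ+1) / ((ℓ+1).factorial : ℝ) := by
    intro ℓ _
    rw [Nat.choose_succ_succ]
    push_cast
    ring
  rw [Finset.sum_congr rfl hsplit, Finset.sum_add_distrib]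
  have h2 : ∑ ℓ ∈ Finset.range (d+1), (d.choose (ℓ+1) : ℝ) * 2^(ℓ+1) * x^(ℓ+1) / ((ℓ+1).factorial : ℝ)
      = ∑ ℓ ∈ Finset.range d, (d.choose (ℓ+1) : ℝ) * 2^(ℓ+1) * x^(ℓ+1) / ((ℓ+1).factorial : ℝ) := by
    rw [Finset.sum_range_succ, Nat.choose_succ_self]
    simp
  rw [h2]
  have h3 : fP d x = ∑ ℓ ∈ Finset.range d, (d.choose (ℓ+1) : ℝ) * 2^(ℓ+1) * x^(ℓ+1) / ((ℓ+1).factorial : ℝ)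
      + ((d+1).choose 0 : ℝ) * 2^0 * x^0 / ((0).factorial : ℝ) := by
    rw [fP, Finset.sum_range_succ' _ d]
    simp
  rw [h3]
  ring

lemma latF_zero_empty (d : ℕ) : latF d 0 = ∅ := by
  ext k
  simp only [mem_latF, Finset.notMem_empty, iff_false]
  intro h
  have : 1 ≤ ∏ j, (1 + (k j).natAbs) := Finset.one_le_prod' fun j _ => Nat.le_add_right 1 _
  omega

lemma main_bound : ∀ d n : ℕ, 1 ≤ n → ((latF d n).card : ℝ) ≤ n * fP d (Real.log n) := by
  intro d
  induction d with
  | zero =>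
    intro n hn
    have hcard : (latF 0 n).card = 1 := by
      rw [Finset.card_eq_one]
      refine ⟨fun i => i.elim0, ?_⟩
      ext k
      simp only [mem_latF, Finset.mem_singleton]
      constructor
      · intro _; funext i; exact i.elim0
      · intro _; simpa using hn
    rw [hcard, fP_zero, mul_one]
    exact_mod_cast hn
  | succ d ih =>
    intro n hn
    set x := Real.log n with hx
    have hx0 : 0 ≤ x := Real.log_nonneg (by exact_mod_cast hn)
    have hrec : ((latF (d+1) n).card : ℝ)
        = ((latF d n).card : ℝ) + 2 * ∑ m ∈ Finset.Icc 1 n, ((latF d (n / (1 + m))).card : ℝ) := by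
      have h := sumIccInt (fun m => ((latF d (n / (1 + m))).card : ℝ)) n
      rw [latF_succ]
      push_cast
      simpa [Nat.div_one] using h
    have hreindex : ∑ m ∈ Finset.Icc 1 n, ((latF d (n / (1 + m))).card : ℝ)
        = ∑ m ∈ Finset.Icc 2 n, ((latF d (n / m)).card : ℝ) := by
      have h1 : ∑ m ∈ Finset.Icc 1 n, ((latF d (n / (1 + m))).card : ℝ)
          = ∑ m ∈ Finset.Icc 2 (n+1), ((latF d (n / m)).card : ℝ) := by
        apply Finset.sum_nbij' (i := fun m => m + 1) (j := fun m => m - 1)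
        · intro a ha; rw [Finset.mem_Icc] at *; omega
        · intro a ha; rw [Finset.mem_Icc] at *; omega
        · intro a ha; omega
        · intro a ha; rw [Finset.mem_Icc] at ha; omega
        · intro a ha; rw [Nat.add_comm 1 a]
      rw [h1, ← Finset.insert_Icc_right_eq_Icc_add_one (by omega), Finset.sum_insert (by simp)]
      rw [Nat.div_eq_of_lt (Nat.lt_add_one n), latF_zero_empty]
      simp
    have key : ∀ m ∈ Finset.Icc 2 n, ((latF d (n/m)).card : ℝ) ≤ ((n:ℝ)/m) * fP d (x - Real.log m) := by
      intro m hm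
      rw [Finset.mem_Icc] at hm
      have hm0 : (0:ℝ) < m := by exact_mod_cast (by omega : 0 < m)
      have hn0 : (0:ℝ) < n := by exact_mod_cast (by omega : 0 < n)
      have hq1 : 1 ≤ n / m := (Nat.one_le_div_iff (by omega)).mpr hm.2
      have hIH := ih (n/m) hq1
      have hcast : ((n/m : ℕ) : ℝ) ≤ (n:ℝ)/m := Nat.cast_div_le
      have hq1r : (1:ℝ) ≤ ((n/m : ℕ) : ℝ) := by exact_mod_cast hq1
      have hlogq0 : 0 ≤ Real.log ((n/m : ℕ) : ℝ) := Real.log_nonneg hq1r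
      have hlogq : Real.log ((n/m : ℕ) : ℝ) ≤ x - Real.log m := by
        have h1 : Real.log ((n/m : ℕ):ℝ) ≤ Real.log ((n:ℝ)/m) :=
          Real.log_le_log (by linarith) hcast
        rw [Real.log_div (ne_of_gt hn0) (ne_of_gt hm0)] at h1
        rw [hx]
        linarith
      calc ((latF d (n/m)).card : ℝ) ≤ ((n/m : ℕ) : ℝ) * fP d (Real.log ((n/m : ℕ) : ℝ)) := hIH
        _ ≤ ((n:ℝ)/m) * fP d (x - Real.log m) :=
            mul_le_mul hcast (fP_mono d hlogq0 hlogq) (fP_nonneg d hlogq0) (by positivity)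
    have sumbound : ∑ m ∈ Finset.Icc 2 n, ((n:ℝ)/m) * fP d (x - Real.log m)
        ≤ ∑ ℓ ∈ Finset.range (d+1),
            (n:ℝ) * ((d.choose ℓ:ℝ) * 2^ℓ / (ℓ.factorial : ℝ)) * (x^(ℓ+1) / (ℓ+1)) := by
      have expand : ∀ m ∈ Finset.Icc 2 n, ((n:ℝ)/m) * fP d (x - Real.log m)
          = ∑ ℓ ∈ Finset.range (d+1),
              (n:ℝ) * ((d.choose ℓ:ℝ) * 2^ℓ / (ℓ.factorial : ℝ)) * ((x - Real.log m)^ℓ / m) := by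
        intro m _
        rw [fP, Finset.mul_sum]
        exact Finset.sum_congr rfl fun ℓ _ => by ring
      rw [Finset.sum_congr rfl expand, Finset.sum_comm]
      apply Finset.sum_le_sum
      intro ℓ _
      rw [← Finset.mul_sum]
      apply mul_le_mul_of_nonneg_left _ (by positivity)
      have htel := tel3 x ℓ n (le_of_eq hx.symm)
      have hzero : x - Real.log n = 0 := by rw [hx]; ring
      rw [hzero] at htel
      calc ∑ m ∈ Finset.Icc 2 n, (x - Real.log m) ^ ℓ / m
          ≤ (x ^ (ℓ+1) - 0 ^ (ℓ+1)) / (ℓ+1) := htel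
        _ = x^(ℓ+1) / ((ℓ:ℝ)+1) := by norm_num
    have hfinal : (n:ℝ) * fP d x + 2 * ∑ ℓ ∈ Finset.range (d+1),
            (n:ℝ) * ((d.choose ℓ:ℝ) * 2^ℓ / (ℓ.factorial : ℝ)) * (x^(ℓ+1) / (ℓ+1))
        = (n:ℝ) * fP (d+1) x := by
      rw [fP_succ, mul_add, Finset.mul_sum, Finset.mul_sum]
      congr 1
      apply Finset.sum_congr rfl
      intro ℓ _
      have hfact : ((ℓ+1).factorial : ℝ) = ((ℓ:ℝ)+1) * (ℓ.factorial : ℝ) := by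
        rw [Nat.factorial_succ]; push_cast; ring
      rw [hfact]
      have h1 : (ℓ.factorial : ℝ) ≠ 0 := by positivity
      have h2 : ((ℓ:ℝ)+1) ≠ 0 := by positivity
      field_simp
      ring
    calc ((latF (d+1) n).card : ℝ)
        = ((latF d n).card : ℝ) + 2 * ∑ m ∈ Finset.Icc 2 n, ((latF d (n / m)).card : ℝ) := by
          rw [hrec, hreindex]
      _ ≤ (n:ℝ) * fP d x + 2 * ∑ m ∈ Finset.Icc 2 n, ((n:ℝ)/m) * fP d (x - Real.log m) := by
          have := ih n hn
          have hs := Finset.sum_le_sum key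
          linarith
      _ ≤ (n:ℝ) * fP d x + 2 * ∑ ℓ ∈ Finset.range (d+1),
            (n:ℝ) * ((d.choose ℓ:ℝ) * 2^ℓ / (ℓ.factorial : ℝ)) * (x^(ℓ+1) / (ℓ+1)) := by
          linarith [sumbound]
      _ = (n:ℝ) * fP (d+1) x := hfinal

lemma fP_le (d : ℕ) : fP d (d : ℝ) ≤ 3^d * Real.exp d := by
  have hterm : ∀ ℓ ∈ Finset.range (d+1),
      (d.choose ℓ : ℝ) * 2^ℓ * (d:ℝ)^ℓ / (ℓ.factorial : ℝ)
        ≤ (d.choose ℓ : ℝ) * 2^ℓ * Real.exp d := by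
    intro ℓ _
    have h1 : (d:ℝ)^ℓ / (ℓ.factorial : ℝ) ≤ Real.exp d := by
      have h2 : (d:ℝ)^ℓ / (ℓ.factorial : ℝ)
          ≤ ∑ i ∈ Finset.range (ℓ+1), (d:ℝ)^i / (i.factorial : ℝ) := by
        apply Finset.single_le_sum (f := fun i => (d:ℝ)^i / (i.factorial : ℝ))
          (fun i _ => by positivity) (Finset.self_mem_range_succ ℓ)
      exact h2.trans (Real.sum_le_exp_of_nonneg (by positivity) (ℓ+1))
    calc (d.choose ℓ : ℝ) * 2^ℓ * (d:ℝ)^ℓ / (ℓ.factorial : ℝ)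
        = (d.choose ℓ : ℝ) * 2^ℓ * ((d:ℝ)^ℓ / (ℓ.factorial : ℝ)) := by ring
      _ ≤ (d.choose ℓ : ℝ) * 2^ℓ * Real.exp d := by
          apply mul_le_mul_of_nonneg_left h1 (by positivity)
  have hsum : ∑ ℓ ∈ Finset.range (d+1), (d.choose ℓ : ℝ) * 2^ℓ = 3^d := by
    have := add_pow (2:ℝ) 1 d
    simp only [one_pow, mul_one] at this
    rw [show (3:ℝ) = 2 + 1 by norm_num, this]
    exact Finset.sum_congr rfl fun ℓ _ => by ring
  calc fP d (d:ℝ) ≤ ∑ ℓ ∈ Finset.range (d+1), (d.choose ℓ : ℝ) * 2^ℓ * Real.exp d :=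
      Finset.sum_le_sum hterm
    _ = (∑ ℓ ∈ Finset.range (d+1), (d.choose ℓ : ℝ) * 2^ℓ) * Real.exp d := by
        rw [Finset.sum_mul]
    _ = 3^d * Real.exp d := by rw [hsum]

theorem stmt9 (d : ℕ) (hd : 1 ≤ d) (r : ℝ) (hr : Real.log r = d) :
    (latticeCount ⌊r⌋₊ d : ℝ) ≤ (3 * Real.exp 2) ^ d := by
  have hrhs : (0:ℝ) ≤ (3 * Real.exp 2) ^ d := by positivity
  rcases le_or_gt r 0 with h0 | h0
  · rw [latticeCount_eq, Nat.floor_of_nonpos h0, latF_zero_empty]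
    simpa using hrhs
  rcases le_or_gt r 1 with h1 | h1
  · exfalso
    have hle : Real.log r ≤ 0 := Real.log_nonpos h0.le h1
    rw [hr] at hle
    have : (1:ℝ) ≤ (d:ℝ) := by exact_mod_cast hd
    linarith
  · have hr0 : 0 < r := h0
    set n := ⌊r⌋₊ with hn
    have hn1 : 1 ≤ n := Nat.le_floor (by exact_mod_cast h1.le)
    have hnr : (n:ℝ) ≤ r := Nat.floor_le hr0.le
    have hlogn : Real.log n ≤ (d:ℝ) := by
      rw [← hr]
      exact Real.log_le_log (by exact_mod_cast hn1) hnr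
    have hlogn0 : 0 ≤ Real.log n := Real.log_nonneg (by exact_mod_cast hn1)
    have hb := main_bound d n hn1
    have hfP : fP d (Real.log n) ≤ 3^d * Real.exp d :=
      (fP_mono d hlogn0 hlogn).trans (fP_le d)
    have hrd : r = Real.exp d := by rw [← hr, Real.exp_log hr0]
    calc (latticeCount n d : ℝ) = ((latF d n).card : ℝ) := by rw [latticeCount_eq]
      _ ≤ n * fP d (Real.log n) := hb
      _ ≤ r * (3^d * Real.exp d) := by
          apply mul_le_mul hnr hfP (fP_nonneg d hlogn0) hr0.le
      _ = (3 * Real.exp 2) ^ d := by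
          rw [hrd, mul_pow, ← Real.exp_nat_mul,
            show ((d:ℝ)*2) = (d:ℝ)+(d:ℝ) by ring, Real.exp_add]
          ring
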